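/- Let Γ be an infinite group and k ≥ 1 a natural number. For every nonempty open subset V of the Bernoulli shift k^Γ, there exists n ∈ ℕ such that for every finite subset F ⊂ Γ with |F| ≥ n, there is a point x ∈ k^Γ whose entire orbit is contained in F·V (where F·V = ⋃_{σ ∈ F} σ·V). -/

import Mathlib

open Finset

namespace BTrap

/-- `X` only depends on coordinates in `S`. -/
def Det {α κ : Type*} (S : Finset α) (X : Finset (α → κ)) : Prop :=
  ∀ x y : α → κ, (∀ a ∈ S, x a = y a) → x ∈ X → y ∈ X

theorem Det.mono {α κ : Type*} {S T : Finset α} {X : Finset (α → κ)}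
    (h : Det S X) (hST : S ⊆ T) : Det T X :=
  fun x y hxy hx => h x y (fun a ha => hxy a (hST ha)) hx

theorem Det.compl {α κ : Type*} [Fintype α] [DecidableEq α] [Fintype κ] [DecidableEq κ]
    {S : Finset α} {X : Finset (α → κ)} (h : Det S X) : Det S Xᶜ := by
  intro x y hxy hx
  simp only [Finset.mem_compl] at hx ⊢
  exact fun hy => hx (h y x (fun a ha => (hxy a ha).symm) hy)

theorem mem_finset_inf {ι Ω : Type*} [Fintype Ω] [DecidableEq Ω] [DecidableEq ι]
    {S : Finset ι} {f : ι → Finset Ω} {x : Ω} :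
    x ∈ S.inf f ↔ ∀ j ∈ S, x ∈ f j := by
  induction S using Finset.induction_on with
  | empty => simp [Finset.inf_empty]
  | @insert i S hi ih =>
      rw [Finset.inf_insert]
      simp only [Finset.inf_eq_inter, Finset.mem_inter] at *
      constructor
      · rintro ⟨h1, h2⟩ j hj
        rcases Finset.mem_insert.mp hj with rfl | hj
        · exact h1
        · exact ih.mp h2 j hj
      · intro h
        exact ⟨h i (Finset.mem_insert_self _ _),
          ih.mpr fun j hj => h j (Finset.mem_insert_of_mem hj)⟩

theorem Det.inf {α κ ι : Type*} [Fintype α] [DecidableEq α] [Fintype κ] [DecidableEq κ]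
    [DecidableEq ι] {T : Finset α} {S : Finset ι} {f : ι → Finset (α → κ)}
    (h : ∀ j ∈ S, Det T (f j)) : Det T (S.inf f) := by
  intro x y hxy hx
  rw [mem_finset_inf] at hx ⊢
  exact fun j hj => h j hj x y hxy (hx j hj)

/-- the merge of `x` (on `S`) and `y` (off `S`). -/
noncomputable def mrg {α κ : Type*} [DecidableEq α] (S : Finset α) (x y : α → κ) : α → κ :=
  fun a => if a ∈ S then x a else y a

/-- Independence: an `S`-determined event and an `Sᶜ`-determined event. -/
theorem card_inter_mul_card {α κ : Type*} [Fintype α] [DecidableEq α] [Fintype κ] [DecidableEq κ]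
    (S : Finset α) (X Y : Finset (α → κ)) (hX : Det S X) (hY : Det Sᶜ Y) :
    (X ∩ Y).card * Fintype.card (α → κ) = X.card * Y.card := by
  classical
  have key : (X ×ˢ Y).card = ((X ∩ Y) ×ˢ (Finset.univ : Finset (α → κ))).card := by
    refine Finset.card_bij' (fun p _ => (mrg S p.1 p.2, mrg S p.2 p.1))
      (fun p _ => (mrg S p.1 p.2, mrg S p.2 p.1)) ?_ ?_ ?_ ?_
    · rintro ⟨x, y⟩ hp
      rw [Finset.mem_product] at hp
      rw [Finset.mem_product]
      refine ⟨Finset.mem_inter.mpr ⟨?_, ?_⟩, Finset.mem_univ _⟩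
      · exact hX x _ (fun a ha => by simp [mrg, ha]) hp.1
      · exact hY y _ (fun a ha => by simp [mrg, Finset.mem_compl.mp ha]) hp.2
    · rintro ⟨z, w⟩ hp
      rw [Finset.mem_product] at hp
      have hz := Finset.mem_inter.mp hp.1
      rw [Finset.mem_product]
      constructor
      · exact hX z _ (fun a ha => by simp [mrg, ha]) hz.1
      · exact hY z _ (fun a ha => by simp [mrg, Finset.mem_compl.mp ha]) hz.2
    · rintro ⟨x, y⟩ _
      have h1 : mrg S (mrg S x y) (mrg S y x) = x := by
        funext a; by_cases ha : a ∈ S <;> simp [mrg, ha]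
      have h2 : mrg S (mrg S y x) (mrg S x y) = y := by
        funext a; by_cases ha : a ∈ S <;> simp [mrg, ha]
      simp [h1, h2]
    · rintro ⟨z, w⟩ _
      have h1 : mrg S (mrg S z w) (mrg S w z) = z := by
        funext a; by_cases ha : a ∈ S <;> simp [mrg, ha]
      have h2 : mrg S (mrg S w z) (mrg S z w) = w := by
        funext a; by_cases ha : a ∈ S <;> simp [mrg, ha]
      simp [h1, h2]
  rw [Finset.card_product, Finset.card_product, Finset.card_univ] at key
  rw [mul_comm ((X ∩ Y).card)] at key
  rw [key, mul_comm]

/-- Counting a "pinning" event. -/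
theorem card_pin {α κ : Type*} [Fintype α] [DecidableEq α] [Fintype κ] [DecidableEq κ]
    (s : Finset α) (pat : α → κ) :
    (Finset.univ.filter (fun x : α → κ => ∀ a ∈ s, x a = pat a)).card * Fintype.card κ ^ s.card
      = Fintype.card (α → κ) := by
  classical
  induction s using Finset.induction_on with
  | empty => simp [Fintype.card_fun]
  | @insert a s ha ih =>
      rw [Finset.card_insert_of_notMem ha, ← ih]
      have key : (Finset.univ.filter (fun x : α → κ => ∀ b ∈ s, x b = pat b)).card
          = (Finset.univ.filter (fun x : α → κ => ∀ b ∈ insert a s, x b = pat b)).card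
            * Fintype.card κ := by
        rw [← Finset.card_univ (α := κ), ← Finset.card_product]
        refine Finset.card_bij' (fun x _ => (Function.update x a (pat a), x a))
          (fun p _ => Function.update p.1 a p.2) ?_ ?_ ?_ ?_
        · intro x hx
          rw [Finset.mem_filter] at hx
          rw [Finset.mem_product]
          refine ⟨Finset.mem_filter.mpr ⟨Finset.mem_univ _, ?_⟩, Finset.mem_univ _⟩
          intro b hb
          rcases Finset.mem_insert.mp hb with rfl | hb
          · dsimp only; simp
          · have hba : b ≠ a := ne_of_mem_of_not_mem hb ha
            dsimp only
            rw [Function.update_of_ne hba]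
            exact hx.2 b hb
        · rintro ⟨z, v⟩ hp
          rw [Finset.mem_product] at hp
          have hz := Finset.mem_filter.mp hp.1
          refine Finset.mem_filter.mpr ⟨Finset.mem_univ _, ?_⟩
          intro b hb
          have hba : b ≠ a := ne_of_mem_of_not_mem hb ha
          dsimp only
          rw [Function.update_of_ne hba]
          exact hz.2 b (Finset.mem_insert_of_mem hb)
        · intro x _
          dsimp only
          rw [Function.update_idem, Function.update_eq_self]
        · rintro ⟨z, v⟩ hp
          rw [Finset.mem_product] at hp
          have hz := Finset.mem_filter.mp hp.1
          have hza : z a = pat a := hz.2 a (Finset.mem_insert_self _ _)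
          dsimp only
          refine Prod.ext ?_ ?_
          · show Function.update (Function.update z a v) a (pat a) = z
            rw [Function.update_idem, ← hza, Function.update_eq_self]
          · show Function.update z a v a = v
            rw [Function.update_self]
      rw [key, pow_succ]
      ring


/-- Counting version of the symmetric Lovász Local Lemma over a finite product space. -/
theorem LLL {α κ ι : Type*} [Fintype α] [DecidableEq α] [Fintype κ] [DecidableEq κ]
    [DecidableEq ι] [Nonempty κ]
    (G : Finset ι) (A : ι → Finset (α → κ)) (supp : ι → Finset α)
    (hdet : ∀ i ∈ G, Det (supp i) (A i))
    (N : ι → Finset ι)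
    (hN : ∀ i ∈ G, ∀ j ∈ G, ¬ Disjoint (supp i) (supp j) → j ∈ N i)
    (d : ℕ) (hd1 : 1 ≤ d) (hNd : ∀ i ∈ G, (N i ∩ G).card ≤ d)
    (pa : ℚ) (hpa0 : 0 ≤ pa)
    (hpa : ∀ i ∈ G, ((A i).card : ℚ) ≤ pa * (Fintype.card (α → κ) : ℚ))
    (hcond : 4 * d * pa ≤ 1) :
    ∃ x : α → κ, ∀ i ∈ G, x ∉ A i := by
  classical
  set Ω : ℚ := (Fintype.card (α → κ) : ℚ) with hΩdef
  have hΩpos : 0 < Ω := by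
    rw [hΩdef]
    have : 0 < Fintype.card (α → κ) := Fintype.card_pos
    exact_mod_cast this
  set I : Finset ι → Finset (α → κ) := fun S => S.inf (fun j => (A j)ᶜ) with hI
  -- independence of A i from intersections over non-neighbours
  have hind : ∀ i ∈ G, ∀ S ⊆ G, (∀ j ∈ S, j ∉ N i) →
      ((A i ∩ I S).card : ℚ) * Ω = ((A i).card : ℚ) * ((I S).card : ℚ) := by
    intro i hi S hSG hSN
    have h := card_inter_mul_card (supp i) (A i) (I S) (hdet i hi) ?_
    · rw [hΩdef]; exact_mod_cast h
    · refine Det.inf (fun j hj => ?_)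
      have hdisj : Disjoint (supp i) (supp j) := by
        by_contra hc
        exact hSN j hj (hN i hi j (hSG hj) hc)
      refine Det.mono (Det.compl (hdet j (hSG hj))) ?_
      intro a haj
      rw [Finset.mem_compl]
      exact fun hai => (Finset.disjoint_left.mp hdisj) hai haj
  -- main induction
  have key : ∀ n : ℕ, ∀ S ⊆ G, S.card ≤ n → ∀ i ∈ G, i ∉ S →
      ((A i ∩ I S).card : ℚ) ≤ 2 * pa * ((I S).card : ℚ) := by
    intro n
    induction n with
    | zero =>
        intro S hSG hScard i hi _
        have hS0 : S = ∅ := Finset.card_eq_zero.mp (Nat.le_zero.mp hScard)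
        subst hS0
        have h0 := hind i hi ∅ (Finset.empty_subset _) (by simp)
        have h2 : ((A i ∩ I ∅).card : ℚ) ≤ pa * ((I ∅).card : ℚ) := by
          refine le_of_mul_le_mul_right ?_ hΩpos
          rw [h0]
          calc ((A i).card : ℚ) * ((I ∅).card : ℚ)
              ≤ (pa * Ω) * ((I ∅).card : ℚ) :=
                mul_le_mul_of_nonneg_right (hpa i hi) (by positivity)
            _ = pa * ((I ∅).card : ℚ) * Ω := by ring
        nlinarith [Nat.cast_nonneg (α := ℚ) ((I ∅).card), hpa0]
    | succ n ih =>
        intro S hSG hScard i hi hiS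
        set S₁ : Finset ι := S.filter (fun j => j ∈ N i) with hS₁
        set S₂ : Finset ι := S.filter (fun j => j ∉ N i) with hS₂
        have hS₂G : S₂ ⊆ G := (Finset.filter_subset _ _).trans hSG
        have hS₂N : ∀ j ∈ S₂, j ∉ N i := fun j hj => (Finset.mem_filter.mp hj).2
        by_cases hS₁e : S₁ = ∅
        · -- all of S is non-neighbours
          have hSN : ∀ j ∈ S, j ∉ N i := by
            intro j hj hjN
            have : j ∈ S₁ := Finset.mem_filter.mpr ⟨hj, hjN⟩
            simp [hS₁e] at this
          have h0 := hind i hi S hSG hSN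
          have h2 : ((A i ∩ I S).card : ℚ) ≤ pa * ((I S).card : ℚ) := by
            refine le_of_mul_le_mul_right ?_ hΩpos
            rw [h0]
            calc ((A i).card : ℚ) * ((I S).card : ℚ)
                ≤ (pa * Ω) * ((I S).card : ℚ) :=
                  mul_le_mul_of_nonneg_right (hpa i hi) (by positivity)
              _ = pa * ((I S).card : ℚ) * Ω := by ring
          nlinarith [Nat.cast_nonneg (α := ℚ) ((I S).card), hpa0]
        · -- S₁ nonempty
          have hS₂card : S₂.card ≤ n := by
            have h1 : 0 < S₁.card := Finset.card_pos.mpr (Finset.nonempty_iff_ne_empty.mpr hS₁e)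
            have h2 : S₁.card + S₂.card = S.card := by
              rw [hS₁, hS₂, Finset.card_filter_add_card_filter_not]
            omega
          -- (a) card (A i ∩ I S₂) ≤ pa * card (I S₂)
          have ha : ((A i ∩ I S₂).card : ℚ) ≤ pa * ((I S₂).card : ℚ) := by
            have h0 := hind i hi S₂ hS₂G hS₂N
            refine le_of_mul_le_mul_right ?_ hΩpos
            rw [h0]
            calc ((A i).card : ℚ) * ((I S₂).card : ℚ)
                ≤ (pa * Ω) * ((I S₂).card : ℚ) :=
                  mul_le_mul_of_nonneg_right (hpa i hi) (by positivity)
              _ = pa * ((I S₂).card : ℚ) * Ω := by ring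
          -- (b) card (I S₂) ≤ 2 * card (I S)
          have hb : ((I S₂).card : ℚ) ≤ 2 * ((I S).card : ℚ) := by
            -- I S₂ ⊆ I S ∪ ⋃_{j ∈ S₁} (A j ∩ I S₂)
            have hsub : I S₂ ⊆ I S ∪ S₁.biUnion (fun j => A j ∩ I S₂) := by
              intro x hx
              rw [Finset.mem_union]
              by_cases hall : ∀ j ∈ S₁, x ∉ A j
              · left
                rw [hI, mem_finset_inf]
                intro j hj
                rw [Finset.mem_compl]
                by_cases hjN : j ∈ N i
                · exact hall j (Finset.mem_filter.mpr ⟨hj, hjN⟩)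
                · exact Finset.mem_compl.mp
                    ((mem_finset_inf).mp hx j (Finset.mem_filter.mpr ⟨hj, hjN⟩))
              · right
                push_neg at hall
                obtain ⟨j, hj, hxj⟩ := hall
                exact Finset.mem_biUnion.mpr ⟨j, hj, Finset.mem_inter.mpr ⟨hxj, hx⟩⟩
            have hcard1 : ((I S₂).card : ℚ)
                ≤ ((I S).card : ℚ) + ∑ j ∈ S₁, ((A j ∩ I S₂).card : ℚ) := by
              have h1 : (I S₂).card ≤ (I S ∪ S₁.biUnion (fun j => A j ∩ I S₂)).card :=
                Finset.card_le_card hsub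
              have h2 : (I S ∪ S₁.biUnion (fun j => A j ∩ I S₂)).card
                  ≤ (I S).card + (S₁.biUnion (fun j => A j ∩ I S₂)).card :=
                Finset.card_union_le _ _
              have h3 : (S₁.biUnion (fun j => A j ∩ I S₂)).card
                  ≤ ∑ j ∈ S₁, (A j ∩ I S₂).card := Finset.card_biUnion_le
              have h4 : (I S₂).card ≤ (I S).card + ∑ j ∈ S₁, (A j ∩ I S₂).card := by omega
              calc ((I S₂).card : ℚ)
                  ≤ (((I S).card + ∑ j ∈ S₁, (A j ∩ I S₂).card : ℕ) : ℚ) := by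
                    exact_mod_cast h4
                _ = ((I S).card : ℚ) + ∑ j ∈ S₁, ((A j ∩ I S₂).card : ℚ) := by
                    push_cast; ring
            have hterm : ∀ j ∈ S₁, ((A j ∩ I S₂).card : ℚ) ≤ 2 * pa * ((I S₂).card : ℚ) := by
              intro j hj
              have hjG : j ∈ G := hSG (Finset.mem_of_mem_filter j hj)
              have hjS₂ : j ∉ S₂ := by
                rw [hS₂, Finset.mem_filter]
                rintro ⟨-, hjn⟩
                exact hjn (Finset.mem_filter.mp hj).2
              exact ih S₂ hS₂G hS₂card j hjG hjS₂
            have hsum : ∑ j ∈ S₁, ((A j ∩ I S₂).card : ℚ)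
                ≤ (S₁.card : ℚ) * (2 * pa * ((I S₂).card : ℚ)) := by
              calc ∑ j ∈ S₁, ((A j ∩ I S₂).card : ℚ)
                  ≤ ∑ _j ∈ S₁, (2 * pa * ((I S₂).card : ℚ)) := Finset.sum_le_sum hterm
                _ = (S₁.card : ℚ) * (2 * pa * ((I S₂).card : ℚ)) := by
                    rw [Finset.sum_const, nsmul_eq_mul]
            have hS₁d : (S₁.card : ℚ) ≤ (d : ℚ) := by
              have : S₁ ⊆ N i ∩ G := by
                intro j hj
                rw [Finset.mem_inter]
                exact ⟨(Finset.mem_filter.mp hj).2, hSG (Finset.mem_of_mem_filter j hj)⟩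
              exact_mod_cast (Finset.card_le_card this).trans (hNd i hi)
            have hpaI : 0 ≤ 2 * pa * ((I S₂).card : ℚ) := by positivity
            have hdp : (d : ℚ) * (2 * pa) ≤ 1 / 2 := by
              have : (0:ℚ) ≤ d := Nat.cast_nonneg d
              nlinarith [hcond]
            nlinarith [hcard1, hsum, hS₁d, hpaI, Nat.cast_nonneg (α := ℚ) ((I S₂).card),
              mul_le_mul_of_nonneg_right hdp (Nat.cast_nonneg (α := ℚ) ((I S₂).card))]
          -- combine
          have hIsub : (A i ∩ I S).card ≤ (A i ∩ I S₂).card := by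
            apply Finset.card_le_card
            have hmono : I S ⊆ I S₂ := by
              intro x hx
              simp only [hI] at hx ⊢
              rw [mem_finset_inf] at hx ⊢
              exact fun j hj => hx j (Finset.mem_of_mem_filter j hj)
            intro x hx
            rw [Finset.mem_inter] at hx ⊢
            exact ⟨hx.1, hmono hx.2⟩
          calc ((A i ∩ I S).card : ℚ) ≤ ((A i ∩ I S₂).card : ℚ) := by exact_mod_cast hIsub
            _ ≤ pa * ((I S₂).card : ℚ) := ha
            _ ≤ pa * (2 * ((I S).card : ℚ)) :=
                mul_le_mul_of_nonneg_left hb hpa0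
            _ = 2 * pa * ((I S).card : ℚ) := by ring
  -- positivity chain
  have hpa14 : 2 * pa ≤ 1 / 2 := by
    have : (1:ℚ) ≤ d := by exact_mod_cast hd1
    nlinarith [hcond, hpa0]
  have pos : ∀ S ⊆ G, 0 < ((I S).card : ℚ) := by
    intro S
    induction S using Finset.induction_on with
    | empty =>
        intro _
        have hIe : I ∅ = Finset.univ := by simp [hI]
        rw [hIe, Finset.card_univ]
        exact hΩpos
    | @insert i S hiS ih =>
        intro hins
        have hiG : i ∈ G := hins (Finset.mem_insert_self _ _)
        have hSG : S ⊆ G := (Finset.subset_insert _ _).trans hins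
        have hIS := ih hSG
        have hkey := key S.card S hSG le_rfl i hiG hiS
        have hstep : I (insert i S) = I S \ A i := by
          simp only [hI]
          rw [Finset.inf_insert]
          rw [Finset.inf_eq_inter]
          ext x
          simp only [Finset.mem_inter, Finset.mem_compl, Finset.mem_sdiff]
          tauto
        have hcard : ((I (insert i S)).card : ℚ)
            = ((I S).card : ℚ) - ((I S ∩ A i).card : ℚ) := by
          rw [hstep]
          have := Finset.card_inter_add_card_sdiff (I S) (A i)
          push_cast [← this]
          ring
        have hAIcomm : (I S ∩ A i).card = (A i ∩ I S).card := by rw [Finset.inter_comm]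
        rw [hcard, hAIcomm]
        have h1 : ((A i ∩ I S).card : ℚ) ≤ 2 * pa * ((I S).card : ℚ) := hkey
        nlinarith [hIS, hpa14, hpa0]
  have hGpos := pos G (le_refl G)
  have : (I G).Nonempty := Finset.card_pos.mp (by exact_mod_cast hGpos)
  obtain ⟨x, hx⟩ := this
  refine ⟨x, fun i hi => ?_⟩
  have := (mem_finset_inf).mp hx i hi
  rwa [Finset.mem_compl] at this


open scoped Pointwise

/-- Greedy extraction of a separated subset. -/
theorem prune {Γ : Type*} [Group Γ] [DecidableEq Γ] (E : Finset Γ)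
    (hE1 : (1 : Γ) ∈ E) (hEsym : ∀ e ∈ E, e⁻¹ ∈ E) :
    ∀ (m : ℕ) (F : Finset Γ), m * E.card ≤ F.card →
      ∃ T : Finset Γ, T ⊆ F ∧ T.card = m ∧ ∀ i ∈ T, ∀ j ∈ T, i ≠ j → i⁻¹ * j ∉ E := by
  intro m
  induction m with
  | zero => exact fun F _ => ⟨∅, Finset.empty_subset _, Finset.card_empty, by simp⟩
  | succ m ih =>
      intro F hF
      have hEpos : 0 < E.card := Finset.card_pos.mpr ⟨1, hE1⟩
      have hFne : F.Nonempty := by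
        apply Finset.card_pos.mp
        have : 0 < (m + 1) * E.card := by positivity
        omega
      obtain ⟨σ, hσ⟩ := hFne
      set B : Finset Γ := E.image (fun e => σ * e) with hB
      have hBcard : B.card ≤ E.card := Finset.card_image_le
      have hF' : m * E.card ≤ (F \ B).card := by
        have h1 : F.card ≤ (F \ B).card + B.card := Finset.card_le_card_sdiff_add_card
        have h2 : (m+1) * E.card ≤ F.card := hF
        have h3 : (m+1) * E.card = m * E.card + E.card := by ring
        omega
      obtain ⟨T', hT'F, hT'card, hT'sep⟩ := ih (F \ B) hF'
      have hT'notB : ∀ j ∈ T', j ∉ B := fun j hj => (Finset.mem_sdiff.mp (hT'F hj)).2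
      have hσB : σ ∈ B := Finset.mem_image.mpr ⟨1, hE1, by simp⟩
      have hσT' : σ ∉ T' := fun h => hT'notB σ h hσB
      refine ⟨insert σ T', ?_, ?_, ?_⟩
      · intro x hx
        rcases Finset.mem_insert.mp hx with rfl | hx
        · exact hσ
        · exact (Finset.mem_sdiff.mp (hT'F hx)).1
      · rw [Finset.card_insert_of_notMem hσT', hT'card]
      · intro i hi j hj hij
        have keyσ : ∀ j ∈ T', σ⁻¹ * j ∉ E := by
          intro j hj hmem
          apply hT'notB j hj
          refine Finset.mem_image.mpr ⟨σ⁻¹ * j, hmem, by group⟩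
        rcases Finset.mem_insert.mp hi with hi' | hi' <;>
          rcases Finset.mem_insert.mp hj with hj' | hj'
        · exact absurd (hi'.trans hj'.symm) hij
        · subst hi'
          exact keyσ j hj'
        · subst hj'
          intro hmem
          have := hEsym _ hmem
          rw [mul_inv_rev, inv_inv] at this
          exact keyσ i hi' this
        · exact hT'sep i hi' j hj' hij

/-- The numeric inequality for the local lemma. -/
theorem numeric (Dc k : ℕ) (hD : 1 ≤ Dc) (hk : 1 ≤ k) :
    4 * ((Dc * (k ^ Dc * (8 * (2 * Dc * k ^ Dc)))) ^ 2 : ℕ)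
      * (1 - 1 / (k ^ Dc : ℚ)) ^ (k ^ Dc * (8 * (2 * Dc * k ^ Dc))) ≤ 1 := by
  set K : ℕ := k ^ Dc with hK
  have hK1 : 1 ≤ K := Nat.one_le_pow _ _ hk
  set c : ℕ := 2 * Dc * K with hc
  have hc2 : 2 ≤ c := by
    rw [hc]
    nlinarith [hD, hK1]
  set t : ℕ := 8 * c with ht
  set m : ℕ := K * t with hm
  have hKQ : (1:ℚ) ≤ (K:ℚ) := by exact_mod_cast hK1
  have hKQpos : (0:ℚ) < (K:ℚ) := by linarith
  set q : ℚ := 1 - 1 / (K:ℚ) with hq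
  have hkq : (1:ℚ) - 1 / (k:ℚ) ^ Dc = q := by rw [hq, hK]; push_cast; ring
  rw [hkq]
  have hq0 : 0 ≤ q := by
    rw [hq]
    have : 1 / (K:ℚ) ≤ 1 := by
      rw [div_le_one hKQpos]; exact hKQ
    linarith
  -- Step A : q^K ≤ 1/2
  have hA : q ^ K ≤ 1 / 2 := by
    rcases eq_or_lt_of_le hK1 with h1 | h2
    · rw [hq, ← h1]
      norm_num
    · -- K ≥ 2
      have hK2 : (2:ℚ) ≤ (K:ℚ) := by exact_mod_cast h2
      have hKm1 : (0:ℚ) < (K:ℚ) - 1 := by linarith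
      set r : ℚ := 1 / ((K:ℚ) - 1) with hr
      have hrpos : 0 < r := by positivity
      have hbern : 2 ≤ (1 + r) ^ K := by
        have h := one_add_mul_le_pow (a := r) (by linarith) K
        have : 1 + (K:ℚ) * r ≥ 2 := by
          rw [hr]
          rw [ge_iff_le, ← sub_nonneg]
          have : (K:ℚ) / ((K:ℚ) - 1) ≥ 1 := by
            rw [ge_iff_le, le_div_iff₀ hKm1]; linarith
          have hKr : (K:ℚ) * (1 / ((K:ℚ) - 1)) = (K:ℚ) / ((K:ℚ)-1) := by ring
          rw [hKr]
          linarith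
        linarith
      have hqr : q = 1 / (1 + r) := by
        rw [hq, hr]
        field_simp
        ring
      rw [hqr, div_pow, one_pow, div_le_div_iff₀ (by positivity) (by norm_num)]
      linarith
  -- Step B : q^m ≤ (1/2)^t
  have hB : q ^ m ≤ (1/2 : ℚ) ^ t := by
    rw [hm, pow_mul]
    exact pow_le_pow_left₀ (by positivity) hA t
  -- Step C : (c*t)^2 ≤ 2^t  in ℕ
  have hC : (c * t) ^ 2 ≤ 2 ^ t := by
    have h1 : c + 1 ≤ 2 ^ c := Nat.succ_le_of_lt (c.lt_two_pow_self)
    have h2 : 4 * c ≤ (c + 1) ^ 2 := by nlinarith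
    have h3 : (4 * c) ^ 4 ≤ ((c + 1) ^ 2) ^ 4 := Nat.pow_le_pow_left h2 4
    have h4 : ((c + 1) ^ 2) ^ 4 ≤ (2 ^ c) ^ 8 := by
      have e1 : ((c + 1) ^ 2) ^ 4 = (c + 1) ^ 8 := by ring
      rw [e1]
      exact Nat.pow_le_pow_left h1 8
    have h5 : (2 ^ c : ℕ) ^ 8 = 2 ^ t := by
      rw [← pow_mul, ht, Nat.mul_comm]
    have h6 : (c * t) ^ 2 = 64 * c ^ 4 := by rw [ht]; ring
    have h7 : 64 * c ^ 4 ≤ (4 * c) ^ 4 := by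
      have e2 : (4 * c) ^ 4 = 256 * c ^ 4 := by ring
      rw [e2]
      exact Nat.mul_le_mul (by norm_num) le_rfl
    calc (c * t) ^ 2 = 64 * c ^ 4 := h6
      _ ≤ (4 * c) ^ 4 := h7
      _ ≤ ((c + 1) ^ 2) ^ 4 := h3
      _ ≤ (2 ^ c) ^ 8 := h4
      _ = 2 ^ t := h5
  -- assemble
  have hdc : (Dc * m : ℕ) = 4 * c ^ 2 := by
    rw [hm, ht, hc]; ring
  have hd4 : (4 * ((Dc * m) ^ 2 : ℕ) : ℚ) = ((c * t : ℕ) ^ 2 : ℚ) := by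
    push_cast [hdc, ht]
    ring
  calc 4 * (((Dc * m) ^ 2 : ℕ) : ℚ) * q ^ m
      ≤ 4 * (((Dc * m) ^ 2 : ℕ) : ℚ) * (1/2:ℚ) ^ t := by
        apply mul_le_mul_of_nonneg_left hB (by positivity)
    _ = ((c * t : ℕ) ^ 2 : ℚ) * (1/2:ℚ) ^ t := by rw [← hd4]
    _ ≤ ((2:ℚ) ^ t) * (1/2:ℚ) ^ t := by
        refine mul_le_mul_of_nonneg_right ?_ (by positivity)
        exact_mod_cast hC
    _ = 1 := by
        rw [div_pow, one_pow]
        field_simp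


set_option maxHeartbeats 2000000 in
theorem finite_stage {Γ : Type*} [Group Γ] [DecidableEq Γ] (k : ℕ) (hk : 1 ≤ k)
    (D : Finset Γ) (hD1 : (1:Γ) ∈ D) (y₀ : Γ → Fin k)
    (F : Finset Γ)
    (hF : k ^ D.card * (8 * (2 * D.card * k ^ D.card)) * (D⁻¹ * D).card ≤ F.card)
    (G : Finset Γ) :
    ∃ x : Γ → Fin k, ∀ γ ∈ G, ∃ σ ∈ F, ∀ d ∈ D, x (d * σ⁻¹ * γ) = y₀ d := by
  classical
  haveI : Nonempty (Fin k) := ⟨⟨0, hk⟩⟩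
  set K : ℕ := k ^ D.card with hK
  set m : ℕ := K * (8 * (2 * D.card * K)) with hm
  set E : Finset Γ := D⁻¹ * D with hE
  have hDc1 : 1 ≤ D.card := Finset.card_pos.mpr ⟨1, hD1⟩
  have hK1 : 1 ≤ K := Nat.one_le_pow _ _ hk
  have hm1 : 1 ≤ m := by
    rw [hm]
    have h8 : 0 < 8 := by norm_num
    have h2 : 0 < 2 := by norm_num
    exact Nat.mul_pos hK1 (Nat.mul_pos h8 (Nat.mul_pos (Nat.mul_pos h2 hDc1) hK1))
  have hE1 : (1:Γ) ∈ E := by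
    have h := Finset.mul_mem_mul (Finset.inv_mem_inv hD1) hD1
    rw [inv_one, one_mul] at h
    exact h
  have hEsym : ∀ e ∈ E, e⁻¹ ∈ E := by
    intro e he
    rw [hE, Finset.mem_mul] at he
    obtain ⟨a, ha, b, hb, rfl⟩ := he
    rw [Finset.mem_inv] at ha
    obtain ⟨d, hd, rfl⟩ := ha
    have := Finset.mul_mem_mul (Finset.inv_mem_inv hb) hd
    simpa [mul_inv_rev] using this
  obtain ⟨T, hTF, hTcard, hTsep⟩ := prune E hE1 hEsym m F hF
  -- the window
  set W : Finset Γ := G.biUnion (fun γ => T.biUnion (fun i => D.image (fun d => d * i⁻¹ * γ)))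
    with hW
  have hWmem : ∀ γ ∈ G, ∀ i ∈ T, ∀ d ∈ D, d * i⁻¹ * γ ∈ W := by
    intro γ hγ i hi d hd
    rw [hW]
    exact Finset.mem_biUnion.mpr ⟨γ, hγ, Finset.mem_biUnion.mpr
      ⟨i, hi, Finset.mem_image.mpr ⟨d, hd, rfl⟩⟩⟩
  set ex : ({w : Γ // w ∈ W} → Fin k) → Γ → Fin k :=
    fun x g => if h : g ∈ W then x ⟨g, h⟩ else ⟨0, hk⟩ with hex
  have hexW : ∀ (x : {w : Γ // w ∈ W} → Fin k) (g : Γ) (hg : g ∈ W), ex x g = x ⟨g, hg⟩ := by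
    intro x g hg
    simp [hex, dif_pos hg]
  -- events
  set hit : Γ → Γ → Finset ({w : Γ // w ∈ W} → Fin k) :=
    fun γ i => Finset.univ.filter (fun x => ∀ d ∈ D, ex x (d * i⁻¹ * γ) = y₀ d) with hhit
  set A : Γ → Finset ({w : Γ // w ∈ W} → Fin k) :=
    fun γ => Finset.univ.filter
      (fun x => ∀ i ∈ T, ¬ ∀ d ∈ D, ex x (d * i⁻¹ * γ) = y₀ d) with hA
  set spot : Γ → Γ → Finset {w : Γ // w ∈ W} :=
    fun γ i => (D.image (fun d => d * i⁻¹ * γ)).subtype (fun w => w ∈ W) with hspot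
  set supp : Γ → Finset {w : Γ // w ∈ W} :=
    fun γ => (T.biUnion (fun i => D.image (fun d => d * i⁻¹ * γ))).subtype (fun w => w ∈ W)
    with hsupp
  set N : Γ → Finset Γ :=
    fun γ => (T ×ˢ D ×ˢ D ×ˢ T).image
      (fun p => p.2.2.2 * p.2.2.1⁻¹ * p.2.1 * p.1⁻¹ * γ) with hNdef
  -- determinedness of hit events
  have hdet_hit : ∀ γ ∈ G, ∀ i ∈ T, Det (spot γ i) (hit γ i) := by
    intro γ hγ i hi x y hagree hx
    simp only [hhit, Finset.mem_filter, Finset.mem_univ, true_and] at hx ⊢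
    intro d hd
    have hg : d * i⁻¹ * γ ∈ W := hWmem γ hγ i hi d hd
    have hmem : (⟨d * i⁻¹ * γ, hg⟩ : {w : Γ // w ∈ W}) ∈ spot γ i := by
      simp only [hspot, Finset.mem_subtype]
      exact Finset.mem_image.mpr ⟨d, hd, rfl⟩
    rw [hexW y _ hg, ← hagree _ hmem, ← hexW x _ hg]
    exact hx d hd
  -- determinedness of A events
  have hdet_A : ∀ γ ∈ G, Det (supp γ) (A γ) := by
    intro γ hγ x y hagree hx
    simp only [hA, Finset.mem_filter, Finset.mem_univ, true_and] at hx ⊢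
    intro i hi hy
    refine hx i hi ?_
    intro d hd
    have hg : d * i⁻¹ * γ ∈ W := hWmem γ hγ i hi d hd
    have hmem : (⟨d * i⁻¹ * γ, hg⟩ : {w : Γ // w ∈ W}) ∈ supp γ := by
      simp only [hsupp, Finset.mem_subtype]
      exact Finset.mem_biUnion.mpr ⟨i, hi, Finset.mem_image.mpr ⟨d, hd, rfl⟩⟩
    rw [hexW x _ hg, hagree _ hmem, ← hexW y _ hg]
    exact hy d hd
  -- A γ as an inf of complements of hits
  have hAinf : ∀ γ : Γ, A γ = T.inf (fun i => (hit γ i)ᶜ) := by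
    intro γ
    ext x
    rw [mem_finset_inf]
    simp only [hA, hhit, Finset.mem_filter, Finset.mem_univ, true_and, Finset.mem_compl]
  -- spots within one γ are pairwise disjoint
  have hspotdisj : ∀ γ : Γ, ∀ i ∈ T, ∀ j ∈ T, i ≠ j → Disjoint (spot γ i) (spot γ j) := by
    intro γ i hi j hj hij
    rw [Finset.disjoint_left]
    intro a hai haj
    simp only [hspot, Finset.mem_subtype] at hai haj
    obtain ⟨d, hd, hda⟩ := Finset.mem_image.mp hai
    obtain ⟨d', hd', hd'a⟩ := Finset.mem_image.mp haj
    have h2 : d * i⁻¹ = d' * j⁻¹ := by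
      have h1 : d * i⁻¹ * γ = d' * j⁻¹ * γ := by rw [hda, hd'a]
      exact mul_right_cancel h1
    have h4 : i⁻¹ * j = d⁻¹ * d' := by
      have h3 : d⁻¹ * (d * i⁻¹) * j = d⁻¹ * (d' * j⁻¹) * j := by rw [h2]
      calc i⁻¹ * j = d⁻¹ * (d * i⁻¹) * j := by group
        _ = d⁻¹ * (d' * j⁻¹) * j := h3
        _ = d⁻¹ * d' := by group
    have hmem : i⁻¹ * j ∈ E := by
      rw [h4, hE]
      exact Finset.mul_mem_mul (Finset.inv_mem_inv hd) hd'
    exact hTsep i hi j hj hij hmem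
  -- overlapping supports force membership in N
  have hsuppN : ∀ γ ∈ G, ∀ γ' ∈ G, ¬ Disjoint (supp γ) (supp γ') → γ' ∈ N γ := by
    intro γ hγ γ' hγ' hnd
    obtain ⟨a, ha, ha'⟩ := Finset.not_disjoint_iff.mp hnd
    simp only [hsupp, Finset.mem_subtype] at ha ha'
    obtain ⟨i, hi, hai⟩ := Finset.mem_biUnion.mp ha
    obtain ⟨j, hj, haj⟩ := Finset.mem_biUnion.mp ha'
    obtain ⟨d0, hd0, h⟩ := Finset.mem_image.mp hai
    obtain ⟨d1, hd1, h'⟩ := Finset.mem_image.mp haj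
    have heq : d1 * j⁻¹ * γ' = d0 * i⁻¹ * γ := by rw [h, h']
    have key : j * d1⁻¹ * d0 * i⁻¹ * γ = γ' := by
      calc j * d1⁻¹ * d0 * i⁻¹ * γ = j * d1⁻¹ * (d0 * i⁻¹ * γ) := by group
        _ = j * d1⁻¹ * (d1 * j⁻¹ * γ') := by rw [heq]
        _ = γ' := by group
    rw [hNdef]
    refine Finset.mem_image.mpr ⟨(i, d0, d1, j), ?_, key⟩
    simp only [Finset.mem_product]
    exact ⟨hi, hd0, hd1, hj⟩
  -- cardinality of a spot
  have hspotcard : ∀ γ ∈ G, ∀ i ∈ T, (spot γ i).card = D.card := by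
    intro γ hγ i hi
    simp only [hspot]
    rw [Finset.card_subtype]
    rw [Finset.filter_true_of_mem]
    · apply Finset.card_image_of_injective
      intro a b hab
      have : a * i⁻¹ = b * i⁻¹ := mul_right_cancel hab
      exact mul_right_cancel this
    · intro w hw
      obtain ⟨d, hd, rfl⟩ := Finset.mem_image.mp hw
      exact hWmem γ hγ i hi d hd
  -- the hit event is a pinning event
  have hhitpin : ∀ γ ∈ G, ∀ i ∈ T, hit γ i
      = Finset.univ.filter
          (fun x : {w : Γ // w ∈ W} → Fin k =>
            ∀ a ∈ spot γ i, x a = y₀ ((a : Γ) * γ⁻¹ * i)) := by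
    intro γ hγ i hi
    ext x
    simp only [hhit, Finset.mem_filter, Finset.mem_univ, true_and]
    constructor
    · intro hx a haspot
      simp only [hspot, Finset.mem_subtype] at haspot
      obtain ⟨d, hd, hda⟩ := Finset.mem_image.mp haspot
      have hgd : (a : Γ) * γ⁻¹ * i = d := by rw [← hda]; group
      rw [hgd]
      have hg : d * i⁻¹ * γ ∈ W := hWmem γ hγ i hi d hd
      have h1 : ex x (d * i⁻¹ * γ) = x ⟨d * i⁻¹ * γ, hg⟩ := hexW x _ hg
      have h2 : (⟨d * i⁻¹ * γ, hg⟩ : {w : Γ // w ∈ W}) = a := Subtype.ext hda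
      rw [← h2]
      rw [← h1]
      exact hx d hd
    · intro hx d hd
      have hg : d * i⁻¹ * γ ∈ W := hWmem γ hγ i hi d hd
      have hmem : (⟨d * i⁻¹ * γ, hg⟩ : {w : Γ // w ∈ W}) ∈ spot γ i := by
        simp only [hspot, Finset.mem_subtype]
        exact Finset.mem_image.mpr ⟨d, hd, rfl⟩
      have hgd : (d * i⁻¹ * γ) * γ⁻¹ * i = d := by group
      rw [hexW x _ hg]
      have := hx _ hmem
      simp only [hgd] at this
      exact this
  -- cardinality of a hit
  have hhitcard : ∀ γ ∈ G, ∀ i ∈ T,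
      (hit γ i).card * K = Fintype.card ({w : Γ // w ∈ W} → Fin k) := by
    intro γ hγ i hi
    rw [hhitpin γ hγ i hi]
    have := card_pin (spot γ i) (fun a : {w : Γ // w ∈ W} => y₀ ((a : Γ) * γ⁻¹ * i))
    rw [Fintype.card_fin, hspotcard γ hγ i hi] at this
    rw [hK]
    exact this
  -- card of A γ
  set Ωn : ℕ := Fintype.card ({w : Γ // w ∈ W} → Fin k) with hΩn
  have hΩpos : 0 < Ωn := Fintype.card_pos
  have hΩQ : (0:ℚ) < (Ωn : ℚ) := by exact_mod_cast hΩpos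
  have hKQ : (0:ℚ) < (K : ℚ) := by exact_mod_cast hK1
  have hAcard : ∀ γ ∈ G, ((A γ).card : ℚ) = (1 - 1/(K:ℚ)) ^ m * (Ωn : ℚ) := by
    intro γ hγ
    have claim : ∀ T' : Finset Γ, T' ⊆ T →
        (((T'.inf fun i => (hit γ i)ᶜ).card : ℚ)) = (1 - 1/(K:ℚ)) ^ T'.card * (Ωn : ℚ) := by
      intro T'
      induction T' using Finset.induction_on with
      | empty =>
          intro _
          simp only [Finset.inf_empty, Finset.card_empty, pow_zero, one_mul]
          rw [Finset.top_eq_univ, Finset.card_univ]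
      | @insert i T'' hiT'' ih =>
          intro hsub
          have hiT : i ∈ T := hsub (Finset.mem_insert_self _ _)
          have hT''T : T'' ⊆ T := (Finset.subset_insert _ _).trans hsub
          have ihv := ih hT''T
          rw [Finset.inf_insert]
          set I' : Finset ({w : Γ // w ∈ W} → Fin k) := T''.inf fun i => (hit γ i)ᶜ with hI'
          have hdetI : Det (spot γ i)ᶜ I' := by
            refine Det.inf (fun j hj => ?_)
            refine Det.mono (Det.compl (hdet_hit γ hγ j (hT''T hj))) ?_
            have hij : i ≠ j := fun h => hiT'' (h ▸ hj)
            have hdisj := hspotdisj γ j (hT''T hj) i hiT (fun h => hij h.symm)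
            intro a haj
            rw [Finset.mem_compl]
            exact fun hai => (Finset.disjoint_left.mp hdisj) haj hai
          have hind := card_inter_mul_card (spot γ i) (hit γ i) I'
            (hdet_hit γ hγ i hiT) hdetI
          -- a * Ω = hit * I'  and  hit * K = Ω  give  a * K = I'
          have hindQ : ((hit γ i ∩ I').card : ℚ) * (Ωn : ℚ)
              = ((hit γ i).card : ℚ) * ((I').card : ℚ) := by exact_mod_cast hind
          have hhitQ : ((hit γ i).card : ℚ) * (K : ℚ) = (Ωn : ℚ) := by
            exact_mod_cast hhitcard γ hγ i hiT
          have haK : ((hit γ i ∩ I').card : ℚ) * (K : ℚ) = ((I').card : ℚ) := by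
            have h1 : ((hit γ i ∩ I').card : ℚ) * (Ωn : ℚ) * (K : ℚ)
                = ((I').card : ℚ) * (Ωn : ℚ) := by
              rw [hindQ]
              calc ((hit γ i).card : ℚ) * ((I').card : ℚ) * (K : ℚ)
                  = (((hit γ i).card : ℚ) * (K : ℚ)) * ((I').card : ℚ) := by ring
                _ = (Ωn : ℚ) * ((I').card : ℚ) := by rw [hhitQ]
                _ = ((I').card : ℚ) * (Ωn : ℚ) := by ring
            have h2 : (((hit γ i ∩ I').card : ℚ) * (K : ℚ)) * (Ωn : ℚ)
                = ((I').card : ℚ) * (Ωn : ℚ) := by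
              calc (((hit γ i ∩ I').card : ℚ) * (K : ℚ)) * (Ωn : ℚ)
                  = ((hit γ i ∩ I').card : ℚ) * (Ωn : ℚ) * (K : ℚ) := by ring
                _ = ((I').card : ℚ) * (Ωn : ℚ) := h1
            exact mul_right_cancel₀ (ne_of_gt hΩQ) h2
          -- card((hit)ᶜ ⊓ I') = I' - (I' ∩ hit)
          have hsd : (hit γ i)ᶜ ⊓ I' = I' \ hit γ i := by
            ext x
            simp only [Finset.inf_eq_inter, Finset.mem_inter, Finset.mem_compl,
              Finset.mem_sdiff]
            tauto
          have hcards : ((I' \ hit γ i).card : ℚ)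
              = ((I').card : ℚ) - ((I' ∩ hit γ i).card : ℚ) := by
            have := Finset.card_inter_add_card_sdiff I' (hit γ i)
            push_cast [← this]
            ring
          rw [hsd, hcards]
          have hcomm : ((I' ∩ hit γ i).card : ℚ) = ((hit γ i ∩ I').card : ℚ) := by
            rw [Finset.inter_comm]
          rw [hcomm]
          have haval : ((hit γ i ∩ I').card : ℚ) = ((I').card : ℚ) / (K : ℚ) := by
            rw [eq_div_iff (ne_of_gt hKQ)]
            exact haK
          rw [haval, ihv, Finset.card_insert_of_notMem hiT'']
          ring
    have := claim T (le_refl T)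
    rw [hTcard] at this
    rw [hAinf γ]
    exact this
  -- apply the local lemma
  have hq0 : (0:ℚ) ≤ 1 - 1/(K:ℚ) := by
    have h1 : 1/(K:ℚ) ≤ 1 := by
      rw [div_le_one hKQ]
      exact_mod_cast hK1
    linarith
  have hd1 : 1 ≤ (D.card * m) ^ 2 := Nat.one_le_pow 2 _ (Nat.mul_pos hDc1 hm1)
  have hNd : ∀ γ ∈ G, ((N γ) ∩ G).card ≤ (D.card * m) ^ 2 := by
    intro γ hγ
    calc ((N γ) ∩ G).card ≤ (N γ).card :=
          Finset.card_le_card (Finset.inter_subset_left)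
      _ ≤ (T ×ˢ D ×ˢ D ×ˢ T).card := by rw [hNdef]; exact Finset.card_image_le
      _ = m * (D.card * (D.card * m)) := by
          simp [Finset.card_product, hTcard]
      _ = (D.card * m) ^ 2 := by ring
  have hpa : ∀ γ ∈ G, ((A γ).card : ℚ) ≤ (1 - 1/(K:ℚ)) ^ m * (Ωn : ℚ) :=
    fun γ hγ => le_of_eq (hAcard γ hγ)
  have hcond : 4 * ((D.card * m) ^ 2 : ℕ) * ((1 - 1/(K:ℚ)) ^ m) ≤ 1 := by
    have hnum := numeric D.card k hDc1 hk
    have hcast : ((k:ℚ)) ^ D.card = ((K : ℕ) : ℚ) := by rw [hK]; push_cast; ring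
    rw [hcast] at hnum
    rw [← hK, ← hm] at hnum
    exact hnum
  obtain ⟨x0, hx0⟩ := LLL G A supp hdet_A N hsuppN ((D.card * m) ^ 2) hd1 hNd
    ((1 - 1/(K:ℚ)) ^ m) (pow_nonneg hq0 m) hpa hcond
  refine ⟨ex x0, ?_⟩
  intro γ hγ
  have hx := hx0 γ hγ
  simp only [hA, Finset.mem_filter, Finset.mem_univ, true_and] at hx
  push_neg at hx
  obtain ⟨i, hi, hgood⟩ := hx
  exact ⟨i, hTF hi, hgood⟩

end BTrap

open scoped Pointwise

/-- For any infinite group `Γ`, `k ≥ 1`, and nonempty open `V ⊆ k^Γ`, there is `n ∈ ℕ`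
such that for every finite `F ⊂ Γ` with `|F| ≥ n` the set `F·V` traps a point, i.e.
some `x ∈ k^Γ` has its whole orbit (under the shift `(γ·x)(δ) = x(δγ)`) inside
`⋃ σ ∈ F, σ·V`. -/
theorem bernoulli_traps_point {Γ : Type*} [Group Γ] [Infinite Γ] (k : ℕ) (hk : 1 ≤ k)
    (V : Set (Γ → Fin k)) (hV : IsOpen V) (hVne : V.Nonempty) :
    ∃ n : ℕ, ∀ F : Finset Γ, n ≤ F.card →
      ∃ x : Γ → Fin k, ∀ γ : Γ,
        (fun δ => x (δ * γ)) ∈ ⋃ σ ∈ F, (fun y : Γ → Fin k => fun δ => y (δ * σ)) '' V := by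
  classical
  obtain ⟨y₀, hy₀⟩ := hVne
  obtain ⟨I, u, hIu, hpi⟩ := isOpen_pi_iff.mp hV y₀ hy₀
  set D : Finset Γ := insert 1 I with hD
  have hD1 : (1:Γ) ∈ D := Finset.mem_insert_self _ _
  have hcyl : ∀ y : Γ → Fin k, (∀ d ∈ D, y d = y₀ d) → y ∈ V := by
    intro y hy
    apply hpi
    rw [Set.mem_pi]
    intro a ha
    have haD : a ∈ D := Finset.mem_insert_of_mem ha
    rw [hy a haD]
    exact (hIu a ha).2
  refine ⟨k ^ D.card * (8 * (2 * D.card * k ^ D.card)) * (D⁻¹ * D).card, ?_⟩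
  intro F hF
  set Z : Γ → Set (Γ → Fin k) :=
    fun γ => {x | ∃ σ ∈ F, ∀ d ∈ D, x (d * σ⁻¹ * γ) = y₀ d} with hZ
  have hZclosed : ∀ γ, IsClosed (Z γ) := by
    intro γ
    have hrw : Z γ = ⋃ σ ∈ (F : Set Γ), ⋂ d ∈ (D : Set Γ),
        {x : Γ → Fin k | x (d * σ⁻¹ * γ) = y₀ d} := by
      ext x
      simp only [hZ, Set.mem_setOf_eq, Set.mem_iUnion, Set.mem_iInter, Finset.mem_coe,
        exists_prop]
    rw [hrw]
    refine Set.Finite.isClosed_biUnion F.finite_toSet (fun σ _ => ?_)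
    refine isClosed_biInter (fun d _ => ?_)
    have h2 : {x : Γ → Fin k | x (d * σ⁻¹ * γ) = y₀ d}
        = (fun x : Γ → Fin k => x (d * σ⁻¹ * γ)) ⁻¹' {y₀ d} := by
      ext x; simp
    rw [h2]
    exact IsClosed.preimage (continuous_apply _) isClosed_singleton
  have hfip : ∀ G : Finset Γ, (Set.univ ∩ ⋂ γ ∈ G, Z γ).Nonempty := by
    intro G
    obtain ⟨x, hx⟩ := BTrap.finite_stage k hk D hD1 y₀ F hF G
    refine ⟨x, Set.mem_inter (Set.mem_univ _) ?_⟩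
    rw [Set.mem_iInter₂]
    intro γ hγ
    exact hx γ hγ
  have hne : (⋂ γ : Γ, Z γ).Nonempty := by
    by_contra h
    rw [Set.not_nonempty_iff_eq_empty] at h
    have h2 : (Set.univ ∩ ⋂ γ : Γ, Z γ) = ∅ := by rw [h]; simp
    obtain ⟨G, hG⟩ := IsCompact.elim_finite_subfamily_closed isCompact_univ Z hZclosed h2
    obtain ⟨x, hx⟩ := hfip G
    rw [hG] at hx
    exact hx
  obtain ⟨x, hx⟩ := hne
  refine ⟨x, fun γ => ?_⟩
  have hxγ : x ∈ Z γ := Set.mem_iInter.mp hx γ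
  simp only [hZ, Set.mem_setOf_eq] at hxγ
  obtain ⟨σ, hσF, hσ⟩ := hxγ
  rw [Set.mem_iUnion₂]
  refine ⟨σ, hσF, ?_⟩
  refine ⟨fun δ => x (δ * σ⁻¹ * γ), ?_, ?_⟩
  · exact hcyl _ (fun d hd => hσ d hd)
  · funext δ
    show x (δ * σ * σ⁻¹ * γ) = x (δ * γ)
    rw [mul_inv_cancel_right]
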